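/- Let B_k denote the Bell numbers defined by B_0 = 1 and B_{k+1} = ∑_{ℓ=0}^k C(k,ℓ) B_ℓ. With U_k^+(x) = x·A_{k−1}^+(1; x) − A_{k−1}^+(0; x) where A^+ are the generating polynomials of Theorem 2 with ε = +1, one has −U_k^+(−1) = B_{k+1} for all k ≥ 1. -/

import Mathlib

open Nat Finset Polynomial

lemma altRefl (t : ℕ) :
    ∑ i ∈ Finset.range (t + 1), (-1 : ℤ) ^ (t - i) * (t.choose i : ℤ)
      = if t = 0 then 1 else 0 := by
  have h1 : ∀ i ∈ Finset.range (t + 1),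
      (-1 : ℤ) ^ (t - i) * (t.choose i : ℤ) = (-1 : ℤ) ^ (t - i) * (t.choose (t - i) : ℤ) := by
    intro i hi
    rw [Finset.mem_range] at hi
    rw [Nat.choose_symm (by omega)]
  rw [Finset.sum_congr rfl h1]
  have h2 := Finset.sum_range_reflect (fun i => (-1 : ℤ) ^ i * (t.choose i : ℤ)) (t + 1)
  simp only [Nat.add_sub_cancel] at h2
  rw [h2, Int.alternating_sum_range_choose]

lemma innerSumChoose (m j : ℕ) (hj : j ≤ m) :
    ∑ ℓ ∈ Finset.Ico j (m + 1), (-1 : ℤ) ^ (m - ℓ) * (m.choose ℓ : ℤ) * (ℓ.choose j : ℤ)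
      = if j = m then 1 else 0 := by
  rw [Finset.sum_Ico_eq_sum_range]
  have hmj : m + 1 - j = (m - j) + 1 := by omega
  rw [hmj]
  have hstep : ∀ i ∈ Finset.range ((m - j) + 1),
      (-1 : ℤ) ^ (m - (j + i)) * (m.choose (j + i) : ℤ) * (((j + i).choose j : ℤ))
        = (m.choose j : ℤ) * ((-1 : ℤ) ^ ((m - j) - i) * ((m - j).choose i : ℤ)) := by
    intro i hi
    rw [Finset.mem_range] at hi
    have h1 : j + i ≤ m := by omega
    have hc' : (m.choose (j + i) : ℤ) * ((j + i).choose j : ℤ)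
        = (m.choose j : ℤ) * ((m - j).choose (j + i - j) : ℤ) :=
      mod_cast congrArg (Nat.cast : ℕ → ℤ) (Nat.choose_mul (n := m) (Nat.le_add_right _ _))
    have h3 : j + i - j = i := by omega
    have h4 : m - (j + i) = (m - j) - i := by omega
    rw [h4]
    calc (-1 : ℤ) ^ ((m - j) - i) * (m.choose (j + i) : ℤ) * (((j + i).choose j : ℤ))
        = (-1 : ℤ) ^ ((m - j) - i) * ((m.choose (j + i) : ℤ) * ((j + i).choose j : ℤ)) := by ring
      _ = (-1 : ℤ) ^ ((m - j) - i) * ((m.choose j : ℤ) * ((m - j).choose i : ℤ)) := by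
          rw [hc', h3]
      _ = (m.choose j : ℤ) * ((-1 : ℤ) ^ ((m - j) - i) * ((m - j).choose i : ℤ)) := by ring
  rw [Finset.sum_congr rfl hstep, ← Finset.mul_sum, altRefl]
  rcases eq_or_lt_of_le hj with h | h
  · simp [h]
  · rw [if_neg (by omega : ¬ m - j = 0), if_neg (by omega : ¬ j = m), mul_zero]

lemma bell_inv (B : ℕ → ℤ) (hB0 : B 0 = 1)
    (hB : ∀ k : ℕ, B (k + 1) = ∑ ℓ ∈ Finset.range (k + 1), (k.choose ℓ : ℤ) * B ℓ)
    (m : ℕ) :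
    ∑ ℓ ∈ Finset.range (m + 1), (-1 : ℤ) ^ (m - ℓ) * (m.choose ℓ : ℤ) * B (ℓ + 1) = B m := by
  calc ∑ ℓ ∈ Finset.range (m + 1), (-1 : ℤ) ^ (m - ℓ) * (m.choose ℓ : ℤ) * B (ℓ + 1)
      = ∑ ℓ ∈ Finset.range (m + 1), ∑ j ∈ Finset.range (ℓ + 1),
          (-1 : ℤ) ^ (m - ℓ) * (m.choose ℓ : ℤ) * ((ℓ.choose j : ℤ) * B j) := by
        refine Finset.sum_congr rfl fun ℓ _ => ?_
        rw [hB ℓ, Finset.mul_sum]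
    _ = ∑ j ∈ Finset.range (m + 1), ∑ ℓ ∈ Finset.Ico j (m + 1),
          (-1 : ℤ) ^ (m - ℓ) * (m.choose ℓ : ℤ) * ((ℓ.choose j : ℤ) * B j) := by
        simp only [Finset.range_eq_Ico]
        exact (Finset.sum_Ico_Ico_comm 0 (m + 1)
          (fun j ℓ => (-1 : ℤ) ^ (m - ℓ) * (m.choose ℓ : ℤ) * ((ℓ.choose j : ℤ) * B j))).symm
    _ = ∑ j ∈ Finset.range (m + 1),
          (∑ ℓ ∈ Finset.Ico j (m + 1),
            (-1 : ℤ) ^ (m - ℓ) * (m.choose ℓ : ℤ) * (ℓ.choose j : ℤ)) * B j := by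
        refine Finset.sum_congr rfl fun j _ => ?_
        rw [Finset.sum_mul]
        exact Finset.sum_congr rfl fun ℓ _ => by ring
    _ = ∑ j ∈ Finset.range (m + 1), (if j = m then 1 else 0 : ℤ) * B j := by
        refine Finset.sum_congr rfl fun j hj => ?_
        rw [Finset.mem_range] at hj
        rw [innerSumChoose m j (by omega)]
    _ = B m := by
        simp [Finset.sum_ite_eq']

/-- With `B_k` the Bell numbers (`B_0 = 1`, `B_{k+1} = ∑_{ℓ=0}^k C(k,ℓ) B_ℓ`) and
`U_k^+(x) = x·A_{k−1}^+(1;x) − A_{k−1}^+(0;x)` built from the generating polynomials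
of Theorem 2 with `ε = +1`, one has `−U_k^+(−1) = B_{k+1}` for all `k ≥ 1`. -/
theorem neg_U_eval_neg_one_eq_bell (A : ℕ → ℤ → Polynomial ℤ)
    (hA0 : ∀ n : ℤ, A 0 n = 1)
    (hrec : ∀ k : ℕ, 1 ≤ k → ∀ n : ℤ,
      (∑ ℓ ∈ Finset.Icc 1 (k + 1),
          Polynomial.C (((k + 1).choose ℓ : ℤ)) * Polynomial.X ^ (k + 1 - ℓ) * A (ℓ - 1) n)
        - A (k - 1) n - Polynomial.C (n ^ k) * Polynomial.X ^ k = 0)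
    (U : ℕ → Polynomial ℤ)
    (hU : ∀ k : ℕ, U k = Polynomial.X * A (k - 1) 1 - A (k - 1) 0)
    (B : ℕ → ℤ)
    (hB0 : B 0 = 1)
    (hB : ∀ k : ℕ, B (k + 1) = ∑ ℓ ∈ Finset.range (k + 1), (k.choose ℓ : ℤ) * B ℓ) :
    ∀ k : ℕ, 1 ≤ k → -((U k).eval (-1)) = B (k + 1) := by
  have hB1 : B 1 = 1 := by simpa [hB0] using hB 0
  have hB2 : B 2 = 2 := by
    have h := hB 1
    simp [Finset.sum_range_succ, hB0, hB1] at h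
    linarith
  have hev : ∀ k : ℕ, 1 ≤ k → ∀ n : ℤ,
      (A k n).eval (-1) = (A (k - 1) n).eval (-1) + n ^ k * (-1) ^ k
        - ∑ ℓ ∈ Finset.Icc 1 k,
            (((k + 1).choose ℓ : ℤ)) * (-1) ^ (k + 1 - ℓ) * (A (ℓ - 1) n).eval (-1) := by
    intro k hk n
    have h := congrArg (Polynomial.eval (-1 : ℤ)) (hrec k hk n)
    simp only [Polynomial.eval_sub, Polynomial.eval_finset_sum, Polynomial.eval_mul,
      Polynomial.eval_pow, Polynomial.eval_C, Polynomial.eval_X, Polynomial.eval_zero] at h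
    rw [Finset.sum_Icc_succ_top (by omega : 1 ≤ k + 1)] at h
    simp only [Nat.choose_self, Nat.cast_one, Nat.sub_self, pow_zero, one_mul, mul_one,
      Nat.add_sub_cancel] at h
    linarith
  have key : ∀ j : ℕ, (A j 1).eval (-1) + (A j 0).eval (-1) = B (j + 2) := by
    intro j
    induction j using Nat.strong_induction_on with
    | _ j ih =>
      rcases j with _ | k
      · rw [hA0, hA0]
        simp only [Polynomial.eval_one]
        linarith [hB2]
      · have h1 := hev (k + 1) (by omega) 1
        have h0 := hev (k + 1) (by omega) 0
        simp only [Nat.add_sub_cancel, one_pow, zero_pow (by omega : k + 1 ≠ 0),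
          zero_mul, one_mul] at h1 h0
        rw [h1, h0]
        have hsum : ∑ ℓ ∈ Finset.Icc 1 (k + 1),
              (((k + 1 + 1).choose ℓ : ℤ)) * (-1) ^ (k + 1 + 1 - ℓ) * (A (ℓ - 1) 1).eval (-1)
            + ∑ ℓ ∈ Finset.Icc 1 (k + 1),
              (((k + 1 + 1).choose ℓ : ℤ)) * (-1) ^ (k + 1 + 1 - ℓ) * (A (ℓ - 1) 0).eval (-1)
            = ∑ ℓ ∈ Finset.Icc 1 (k + 1),
              (((k + 2).choose ℓ : ℤ)) * (-1) ^ (k + 2 - ℓ) * B (ℓ + 1) := by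
          rw [← Finset.sum_add_distrib]
          refine Finset.sum_congr rfl fun ℓ hℓ => ?_
          rw [Finset.mem_Icc] at hℓ
          have hih := ih (ℓ - 1) (by omega)
          have h2 : ℓ - 1 + 2 = ℓ + 1 := by omega
          rw [h2] at hih
          have h3 : k + 1 + 1 - ℓ = k + 2 - ℓ := by omega
          have h4 : k + 1 + 1 = k + 2 := by omega
          rw [h3, h4, ← hih]
          ring
        have hbell := bell_inv B hB0 hB (k + 2)
        rw [Finset.sum_range_succ, Finset.sum_range_succ'] at hbell
        have hico : ∑ ℓ ∈ Finset.Icc 1 (k + 1),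
              (((k + 2).choose ℓ : ℤ)) * (-1) ^ (k + 2 - ℓ) * B (ℓ + 1)
            = ∑ i ∈ Finset.range (k + 1),
              (-1 : ℤ) ^ (k + 2 - (i + 1)) * (((k + 2).choose (i + 1) : ℤ)) * B (i + 1 + 1) := by
          rw [← Finset.Ico_add_one_right_eq_Icc, Finset.sum_Ico_eq_sum_range]
          refine Finset.sum_congr (by congr 1) fun i _ => ?_
          have h5 : 1 + i = i + 1 := by omega
          rw [h5]
          ring
        have hpow : ((-1 : ℤ)) ^ (k + 2) = -(-1 : ℤ) ^ (k + 1) := by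
          rw [pow_succ]; ring
        simp only [Nat.choose_self, Nat.cast_one, Nat.sub_self, pow_zero, one_mul, mul_one,
          Nat.choose_zero_right, Nat.sub_zero] at hbell
        have hk3 : k + 2 + 1 = k + 3 := rfl
        rw [hB1] at hbell
        have hgoal : k + 1 + 2 = k + 3 := by omega
        rw [hgoal]
        have hik := ih k (by omega)
        linarith [hsum, hbell, hico, hik, hpow]
  intro k hk
  rw [hU k]
  simp only [Polynomial.eval_sub, Polynomial.eval_mul, Polynomial.eval_X]
  have := key (k - 1)
  have h6 : k - 1 + 2 = k + 1 := by omega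
  rw [h6] at this
  linarith
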